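/- Let m ≥ 2, let a₁,…,a_{m−1} be real numbers, and let p(s) = s^{m−1} + a_{m−1}s^{m−2} + ⋯ + a₂s + a₁. Suppose every complex root of p has negative real part. Let x₁,…,x_m : ℝ → ℝ be differentiable functions with x_j′(t) = x_{j+1}(t) for all t ≥ 0 and all j = 1,…,m−1, and suppose lim_{t→∞} (a₁x₁(t) + a₂x₂(t) + ⋯ + a_{m−1}x_{m−1}(t) + x_m(t)) = c for some c ∈ ℝ. Then lim_{t→∞} x₁(t) = c/a₁ and lim_{t→∞} x_j(t) = 0 for every j = 2,…,m. -/

import Mathlib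

open Filter MeasureTheory intervalIntegral Polynomial


lemma expDeriv (z : ℂ) (s : ℝ) :
    HasDerivAt (fun u : ℝ => Complex.exp (z * u)) (z * Complex.exp (z * s)) s := by
  have h : HasDerivAt (fun u : ℝ => z * (u:ℂ)) z s := by
    simpa using (Complex.ofRealCLM.hasDerivAt (x := s)).const_mul z
  simpa [mul_comm] using h.cexp

lemma norm_exp_mul_ofReal (z : ℂ) (s : ℝ) :
    ‖Complex.exp (z * s)‖ = Real.exp (z.re * s) := by
  rw [Complex.norm_exp]
  congr 1
  simp [Complex.mul_re]

lemma decay0 (z : ℂ) (hz : z.re < 0) (v g : ℝ → ℂ)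
    (hv : ∀ t : ℝ, 0 ≤ t → HasDerivAt v (z * v t + g t) t)
    (hg : Tendsto g atTop (nhds 0)) : Tendsto v atTop (nhds 0) := by
  have hβ : 0 < -z.re := by linarith
  set β := -z.re with hβdef
  rw [NormedAddCommGroup.tendsto_nhds_zero]
  intro ε hε
  have hg' : ∀ᶠ s in atTop, ‖g s‖ ≤ ε * β / 2 := by
    have := (NormedAddCommGroup.tendsto_nhds_zero.1 hg) (ε * β / 2) (by positivity)
    exact this.mono fun s hs => le_of_lt hs
  obtain ⟨T, hT⟩ := (hg'.and (eventually_ge_atTop (1:ℝ))).exists_forall_of_atTop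
  have hT1 : (1:ℝ) ≤ T := (hT T le_rfl).2
  have hT0 : (0:ℝ) ≤ T := by linarith
  set w : ℝ → ℂ := fun s => Complex.exp (-z * s) * v s with hw
  have hwderiv : ∀ s : ℝ, 0 ≤ s → HasDerivAt w (Complex.exp (-z * s) * g s) s := by
    intro s hs
    have := (expDeriv (-z) s).mul (hv s hs)
    exact this.congr_deriv (by ring)
  have key : ∀ t : ℝ, T ≤ t → ‖v t‖ ≤ Real.exp (z.re * t) * ‖w T‖ + ε / 2 := by
    intro t ht
    set h : ℝ → ℂ := fun s : ℝ => Complex.exp (-z * s) * g s with hh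
    have hcont : Continuous fun s : ℝ => Complex.exp (-z * s) :=
      Complex.continuous_exp.comp (continuous_const.mul Complex.continuous_ofReal)
    have hmeas : AEStronglyMeasurable h (volume.restrict (Set.Ioc T t)) := by
      have hvc : ContinuousOn v (Set.Ioc T t) := fun s hs =>
        ((hv s (le_trans hT0 hs.1.le)).continuousAt.continuousWithinAt)
      have m1 : AEStronglyMeasurable v (volume.restrict (Set.Ioc T t)) :=
        hvc.aestronglyMeasurable measurableSet_Ioc
      have m2 : AEStronglyMeasurable (deriv v) (volume.restrict (Set.Ioc T t)) :=
        (measurable_deriv v).aestronglyMeasurable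
      have mφ : AEStronglyMeasurable
          (fun s : ℝ => Complex.exp (-z * s) * (deriv v s - z * v s))
          (volume.restrict (Set.Ioc T t)) :=
        (hcont.aestronglyMeasurable).mul (m2.sub (m1.const_mul z))
      refine mφ.congr ?_
      rw [Filter.EventuallyEq, ae_restrict_iff' measurableSet_Ioc]
      refine ae_of_all _ fun s hs => ?_
      have hds : deriv v s = z * v s + g s := (hv s (le_trans hT0 hs.1.le)).deriv
      rw [hds]; ring
    have hbound : ∀ s ∈ Set.Icc T t, ‖h s‖ ≤ Real.exp (β * t) * (ε * β / 2) := by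
      intro s hs
      rw [hh]
      simp only [norm_mul]
      rw [norm_exp_mul_ofReal]
      have hre : (-z).re = β := by simp [hβdef]
      rw [hre]
      have h1 : Real.exp (β * s) ≤ Real.exp (β * t) := by
        apply Real.exp_le_exp.2
        nlinarith [hs.1, hs.2, hβ, hT1]
      exact mul_le_mul h1 (hT s hs.1).1 (norm_nonneg _) (le_of_lt (Real.exp_pos _))
    have hint : IntervalIntegrable h volume T t := by
      rw [intervalIntegrable_iff, Set.uIoc_of_le ht]
      exact (integrable_const _).mono' hmeas
        ((ae_restrict_iff' measurableSet_Ioc).2 (ae_of_all _ fun s hs =>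
          hbound s (Set.Ioc_subset_Icc_self hs)))
    have hFTC : (∫ s in T..t, h s) = w t - w T := by
      apply integral_eq_sub_of_hasDerivAt
      · intro s hs
        rw [Set.uIcc_of_le ht] at hs
        exact hwderiv s (le_trans hT0 hs.1)
      · exact hint
    have hnormint : ‖∫ s in T..t, h s‖ ≤ ε / 2 * Real.exp (β * t) := by
      have step2 : (∫ s in T..t, ‖h s‖) ≤ ∫ s in T..t, Real.exp (β * s) * (ε * β / 2) := by
        refine integral_mono_on ht hint.norm
          (Continuous.intervalIntegrable (by continuity) _ _) ?_
        intro s hs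
        rw [hh]
        simp only [norm_mul]
        rw [norm_exp_mul_ofReal]
        have hre : (-z).re = β := by simp [hβdef]
        rw [hre]
        exact mul_le_mul_of_nonneg_left (hT s hs.1).1 (le_of_lt (Real.exp_pos _))
      have step3 : (∫ s in T..t, Real.exp (β * s) * (ε * β / 2))
          = Real.exp (β * t) * (ε/2) - Real.exp (β * T) * (ε/2) := by
        have hAD : ∀ s : ℝ, HasDerivAt (fun u : ℝ => Real.exp (β * u) * (ε/2))
            (Real.exp (β * s) * (ε * β / 2)) s := by
          intro s
          have h1 : HasDerivAt (fun u : ℝ => β * u) β s := by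
            simpa using (hasDerivAt_id s).const_mul β
          have := (h1.exp).mul_const (ε/2)
          exact this.congr_deriv (by ring)
        rw [integral_eq_sub_of_hasDerivAt (fun s _ => hAD s)
          (Continuous.intervalIntegrable (by continuity) _ _)]
      calc ‖∫ s in T..t, h s‖ ≤ ∫ s in T..t, ‖h s‖ := norm_integral_le_integral_norm ht
        _ ≤ Real.exp (β * t) * (ε/2) - Real.exp (β * T) * (ε/2) := by
            rw [← step3]; exact step2
        _ ≤ ε / 2 * Real.exp (β * t) := by nlinarith [Real.exp_pos (β * T), hε]
    have hvt : v t = Complex.exp (z * t) * w t := by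
      rw [hw]
      simp only
      rw [← mul_assoc, ← Complex.exp_add]
      have h0 : z * t + -z * t = 0 := by ring
      rw [h0, Complex.exp_zero, one_mul]
    have hwt : w t = w T + ∫ s in T..t, h s := by rw [hFTC]; ring
    rw [hvt, hwt]
    calc ‖Complex.exp (z * t) * (w T + ∫ s in T..t, h s)‖
        = Real.exp (z.re * t) * ‖w T + ∫ s in T..t, h s‖ := by
          rw [norm_mul, norm_exp_mul_ofReal]
      _ ≤ Real.exp (z.re * t) * (‖w T‖ + ‖∫ s in T..t, h s‖) :=
          mul_le_mul_of_nonneg_left (norm_add_le _ _) (le_of_lt (Real.exp_pos _))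
      _ ≤ Real.exp (z.re * t) * (‖w T‖ + ε / 2 * Real.exp (β * t)) :=
          mul_le_mul_of_nonneg_left (by linarith) (le_of_lt (Real.exp_pos _))
      _ = Real.exp (z.re * t) * ‖w T‖ + ε/2 * (Real.exp (z.re * t) * Real.exp (β * t)) := by
          ring
      _ = Real.exp (z.re * t) * ‖w T‖ + ε / 2 := by
          rw [← Real.exp_add]
          have h0 : z.re * t + β * t = 0 := by rw [hβdef]; ring
          rw [h0, Real.exp_zero, mul_one]
  have hdecay : Tendsto (fun t => Real.exp (z.re * t) * ‖w T‖) atTop (nhds 0) := by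
    have h0 : Tendsto (fun t : ℝ => Real.exp (z.re * t)) atTop (nhds 0) :=
      Real.tendsto_exp_comp_nhds_zero.2 ((tendsto_const_mul_atBot_of_neg hz).2 tendsto_id)
    simpa using h0.mul_const ‖w T‖
  have hev : ∀ᶠ t in atTop, Real.exp (z.re * t) * ‖w T‖ < ε / 2 :=
    hdecay.eventually (gt_mem_nhds (by positivity))
  filter_upwards [hev, eventually_ge_atTop T] with t h1 h2
  calc ‖v t‖ ≤ Real.exp (z.re * t) * ‖w T‖ + ε / 2 := key t h2
    _ < ε / 2 + ε / 2 := by linarith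
    _ = ε := by ring

lemma decay (z : ℂ) (hz : z.re < 0) (v d : ℝ → ℂ) (L : ℂ)
    (hv : ∀ t : ℝ, 0 ≤ t → HasDerivAt v (d t) t)
    (h : Tendsto (fun t => d t - z * v t) atTop (nhds L)) :
    Tendsto v atTop (nhds (L / (-z))) := by
  have hz0 : z ≠ 0 := fun h0 => by simp [h0] at hz
  have hmain : Tendsto (fun t => v t - L / (-z)) atTop (nhds 0) := by
    apply decay0 z hz _ (fun t => d t - z * v t - L)
    · intro t ht
      have := (hv t ht).sub_const (L / (-z))
      refine this.congr_deriv ?_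
      have hzz : z * L / -z = -L := by rw [div_neg, mul_comm, mul_div_assoc, div_self hz0, mul_one]
      rw [mul_sub, mul_div_assoc'] at *
      rw [hzz]
      ring
    · simpa using h.sub_const L
  have := hmain.add_const (L / (-z))
  simpa using this

lemma deriv_lim_zero (f g : ℝ → ℝ) (L L' : ℝ)
    (hf : ∀ t : ℝ, 0 ≤ t → HasDerivAt f (g t) t)
    (h1 : Tendsto f atTop (nhds L)) (h2 : Tendsto g atTop (nhds L')) : L' = 0 := by
  have hex : ∀ t : ℝ, 0 ≤ t → ∃ ξ ∈ Set.Ioo t (t+1), g ξ = (f (t+1) - f t) / (t + 1 - t) := by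
    intro t ht
    apply exists_hasDerivAt_eq_slope f g (by linarith)
    · intro s hs
      exact ((hf s (by linarith [hs.1])).continuousAt).continuousWithinAt
    · intro s hs
      exact hf s (by linarith [hs.1.le])
  choose! ξ hξ hgξ using hex
  have hξ_tendsto : Tendsto ξ atTop atTop := by
    refine tendsto_atTop_mono' atTop ?_ tendsto_id
    filter_upwards [eventually_ge_atTop (0:ℝ)] with t ht
    exact (hξ t ht).1.le
  have ha : Tendsto (fun t => g (ξ t)) atTop (nhds L') := h2.comp hξ_tendsto
  have hb : Tendsto (fun t => g (ξ t)) atTop (nhds 0) := by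
    have hc : Tendsto (fun t => (f (t+1) - f t) / (t + 1 - t)) atTop (nhds 0) := by
      have : Tendsto (fun t => f (t+1) - f t) atTop (nhds (L - L)) :=
        (h1.comp (tendsto_atTop_add_const_right _ 1 tendsto_id)).sub h1
      simpa using this
    apply hc.congr'
    filter_upwards [eventually_ge_atTop (0:ℝ)] with t ht
    exact (hgξ t ht).symm
  have := tendsto_nhds_unique ha hb
  exact this

noncomputable def Fop (n : ℕ) (X : ℕ → ℝ → ℂ) (q : ℂ[X]) : ℝ → ℂ :=
  fun t => ∑ i ∈ Finset.range (n+1), q.coeff i * X (i+1) t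

lemma listprod_monic (l : List ℂ) : ((l.map fun z => X - C z).prod).Monic ∧
    ((l.map fun z => X - C z).prod).natDegree = l.length := by
  induction l with
  | nil => simp [monic_one]
  | cons z l ih =>
    simp only [List.map_cons, List.prod_cons, List.length_cons]
    refine ⟨(monic_X_sub_C z).mul ih.1, ?_⟩
    rw [natDegree_mul (X_sub_C_ne_zero z) ih.1.ne_zero, natDegree_X_sub_C, ih.2]
    omega

lemma Fop_hasDeriv (n : ℕ) (X : ℕ → ℝ → ℂ)
    (hchain : ∀ j, 1 ≤ j → j ≤ n → ∀ t : ℝ, 0 ≤ t → HasDerivAt (X j) (X (j+1) t) t)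
    (q : ℂ[X]) (hq : q.natDegree < n) (t : ℝ) (ht : 0 ≤ t) :
    HasDerivAt (Fop n X q) (Fop n X (Polynomial.X * q) t) t := by
  have h1 : HasDerivAt (Fop n X q) (∑ i ∈ Finset.range (n+1), q.coeff i * X (i+2) t) t := by
    apply HasDerivAt.fun_sum
    intro i hi
    by_cases h0 : q.coeff i = 0
    · simpa [h0] using hasDerivAt_const t (0:ℂ)
    · have hin : i < n := lt_of_le_of_lt (le_natDegree_of_ne_zero h0) hq
      exact (hchain (i+1) (by omega) (by omega) t ht).const_mul _
  convert h1 using 1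
  unfold Fop
  have e1 := Finset.sum_range_succ' (fun i => (Polynomial.X * q).coeff i * X (i+1) t) n
  have e2 := Finset.sum_range_succ (fun i => q.coeff i * X (i+2) t) n
  rw [e1, e2]
  have hc0 : (Polynomial.X * q).coeff 0 = 0 := by
    rw [mul_coeff_zero, coeff_X_zero, zero_mul]
  have hcn : q.coeff n = 0 := coeff_eq_zero_of_natDegree_lt hq
  rw [hc0, hcn]
  simp only [zero_mul, add_zero]
  congr 1
  ext i
  rw [coeff_X_mul]

lemma Fop_factor (n : ℕ) (X : ℕ → ℝ → ℂ) (z : ℂ) (q : ℂ[X]) (t : ℝ) :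
    Fop n X ((Polynomial.X - C z) * q) t
      = Fop n X (Polynomial.X * q) t - z * Fop n X q t := by
  unfold Fop
  rw [Finset.mul_sum, ← Finset.sum_sub_distrib]
  congr 1
  ext i
  rw [sub_mul, coeff_sub, coeff_C_mul]
  ring

lemma peel (n : ℕ) (X : ℕ → ℝ → ℂ)
    (hchain : ∀ j, 1 ≤ j → j ≤ n → ∀ t : ℝ, 0 ≤ t → HasDerivAt (X j) (X (j+1) t) t)
    (l : List ℂ) :
    (∀ z ∈ l, z.re < 0) → ∀ q : ℂ[X], q ≠ 0 → l.length + q.natDegree ≤ n →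
    ∀ L : ℂ, Tendsto (Fop n X ((l.map fun z => Polynomial.X - C z).prod * q)) atTop (nhds L) →
    Tendsto (Fop n X q) atTop (nhds (L / (l.map fun z => -z).prod)) := by
  induction l with
  | nil => intro _ q _ _ L h; simpa using h
  | cons z l ih =>
    intro hneg q hq hlen L h
    set Q : ℂ[X] := (l.map fun z => Polynomial.X - C z).prod * q with hQ
    have hQ0 : Q ≠ 0 := mul_ne_zero (listprod_monic l).1.ne_zero hq
    have hQdeg : Q.natDegree < n := by
      rw [hQ, natDegree_mul (listprod_monic l).1.ne_zero hq, (listprod_monic l).2]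
      simp only [List.length_cons] at hlen
      omega
    have h' : Tendsto (fun t => Fop n X (Polynomial.X * Q) t - z * Fop n X Q t)
        atTop (nhds L) := by
      apply h.congr
      intro t
      simp only [List.map_cons, List.prod_cons, mul_assoc, ← hQ]
      exact Fop_factor n X z Q t
    have hderiv : ∀ t : ℝ, 0 ≤ t → HasDerivAt (Fop n X Q) (Fop n X (Polynomial.X * Q) t) t :=
      fun t ht => Fop_hasDeriv n X hchain Q hQdeg t ht
    have hdq : Tendsto (Fop n X Q) atTop (nhds (L / (-z))) :=
      decay z (hneg z (List.mem_cons_self)) _ _ L hderiv h'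
    have := ih (fun w hw => hneg w (List.mem_cons_of_mem z hw)) q hq
      (by simp only [List.length_cons] at hlen; omega) (L / (-z)) hdq
    convert this using 2
    simp only [List.map_cons, List.prod_cons]
    rw [div_div]

/-- If all complex roots of `s^(m-1) + a_{m-1} s^(m-2) + ⋯ + a₁` have negative real part,
`x₁,…,x_m` form an integrator chain (`xⱼ′ = x_{j+1}`) on `[0,∞)`, and
`a₁x₁ + ⋯ + a_{m−1}x_{m−1} + x_m → c`, then `x₁ → c/a₁` and `xⱼ → 0` for `j = 2,…,m`. -/
theorem integrator_chain_convergence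
    (m : ℕ) (hm : 2 ≤ m) (a : ℕ → ℝ)
    (hroots : ∀ z : ℂ,
      z ^ (m - 1) + ∑ i ∈ Finset.range (m - 1), (a (i + 1) : ℂ) * z ^ i = 0 → z.re < 0)
    (x : ℕ → ℝ → ℝ)
    (hchain : ∀ j : ℕ, 1 ≤ j → j ≤ m - 1 → ∀ t : ℝ, 0 ≤ t →
      HasDerivAt (x j) (x (j + 1) t) t)
    (c : ℝ)
    (hlim : Tendsto
      (fun t => (∑ i ∈ Finset.range (m - 1), a (i + 1) * x (i + 1) t) + x m t)
      atTop (nhds c)) :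
    Tendsto (x 1) atTop (nhds (c / a 1)) ∧
      ∀ j : ℕ, 2 ≤ j → j ≤ m → Tendsto (x j) atTop (nhds 0) := by
  set n := m - 1 with hn
  have hn1 : 1 ≤ n := by omega
  have hm' : m = n + 1 := by omega
  set X : ℕ → ℝ → ℂ := fun j t => ((x j t : ℝ) : ℂ) with hX
  have hchainC : ∀ j, 1 ≤ j → j ≤ n → ∀ t : ℝ, 0 ≤ t → HasDerivAt (X j) (X (j+1) t) t :=
    fun j h1 h2 t ht => (hchain j h1 h2 t ht).ofReal_comp
  set P : ℂ[X] := Polynomial.X ^ n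
      + ∑ i ∈ Finset.range n, Polynomial.C ((a (i+1) : ℝ) : ℂ) * Polynomial.X ^ i with hP
  have hsumdeg : (∑ i ∈ Finset.range n,
      Polynomial.C ((a (i+1) : ℝ) : ℂ) * Polynomial.X ^ i).degree < ((n : ℕ) : WithBot ℕ) := by
    apply lt_of_le_of_lt (Polynomial.degree_sum_le _ _)
    rw [Finset.sup_lt_iff (by exact_mod_cast WithBot.bot_lt_coe n)]
    intro i hi
    apply lt_of_le_of_lt (degree_C_mul_X_pow_le _ _)
    exact_mod_cast Finset.mem_range.1 hi
  have hPmonic : P.Monic := monic_X_pow_add hsumdeg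
  have hPdeg : P.degree = (n : ℕ) := by
    rw [hP, degree_add_eq_left_of_degree_lt (by rwa [degree_X_pow]), degree_X_pow]
  have hPnatdeg : P.natDegree = n := natDegree_eq_of_degree_eq_some hPdeg
  have hPcoeff : ∀ i : ℕ, i < n → P.coeff i = ((a (i+1) : ℝ) : ℂ) := by
    intro i hi
    rw [hP, coeff_add, coeff_X_pow, if_neg (by omega), finset_sum_coeff]
    simp only [coeff_C_mul, coeff_X_pow]
    rw [Finset.sum_eq_single i]
    · simp
    · intro j hj hne; simp [Ne.symm hne]
    · intro h; exact absurd (Finset.mem_range.2 hi) h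
  have hsp : Splits P := IsAlgClosed.splits P
  set l : List ℂ := P.roots.toList with hl
  have hllen : l.length = n := by
    rw [hl, Multiset.length_toList, splits_iff_card_roots.1 hsp, hPnatdeg]
  have hlprod : ((l.map fun z => Polynomial.X - C z).prod) = P := by
    have h1 := hsp.eq_prod_roots_of_monic hPmonic
    rw [hl]
    conv_rhs => rw [h1]
    rw [← Multiset.prod_coe, ← Multiset.map_coe, Multiset.coe_toList]
  have hneg : ∀ z ∈ l, z.re < 0 := by
    intro z hz
    have hroot : P.IsRoot z := by
      have := Multiset.mem_toList.1 hz
      exact isRoot_of_mem_roots this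
    apply hroots z
    have := hroot
    rw [IsRoot.def, hP] at this
    simpa [eval_finset_sum] using this
  have hlimC : Tendsto (Fop n X P) atTop (nhds ((c:ℝ):ℂ)) := by
    have h1 : Tendsto (fun t => (((∑ i ∈ Finset.range n, a (i+1) * x (i+1) t) + x m t : ℝ) : ℂ))
        atTop (nhds ((c:ℝ):ℂ)) := (Complex.continuous_ofReal.tendsto c).comp hlim
    apply h1.congr
    intro t
    unfold Fop
    rw [Finset.sum_range_succ]
    have hcn : P.coeff n = 1 := by
      have h2 := hPmonic
      rw [Monic, leadingCoeff, hPnatdeg] at h2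
      exact h2
    rw [hcn, one_mul]
    push_cast
    congr 1
    · apply Finset.sum_congr rfl
      intro i hi
      rw [hPcoeff i (Finset.mem_range.1 hi)]
    · rw [hm']
  have hsplit : ∀ d, d ≤ n →
      Tendsto (Fop n X (((l.drop (n - d)).map fun z => Polynomial.X - C z).prod))
      atTop (nhds (((c:ℝ):ℂ) / (((l.take (n-d)).map fun z => -z).prod))) := by
    intro d hd
    have hdroplen : (l.drop (n-d)).length = d := by rw [List.length_drop, hllen]; omega
    have htakelen : (l.take (n-d)).length = n - d := by rw [List.length_take, hllen]; omega
    apply peel n X hchainC (l.take (n-d))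
      (fun z hz => hneg z (List.mem_of_mem_take hz)) _
      (listprod_monic _).1.ne_zero
      (by rw [htakelen, (listprod_monic _).2, hdroplen]; omega)
    have heq : ((l.take (n-d)).map fun z => Polynomial.X - C z).prod *
        ((l.drop (n-d)).map fun z => Polynomial.X - C z).prod = P := by
      rw [← List.prod_append, ← List.map_append, List.take_append_drop, hlprod]
    rw [heq]
    exact hlimC
  have hXlim : ∀ d : ℕ, d ≤ n → ∃ ℓ : ℂ, Tendsto (X (d+1)) atTop (nhds ℓ) := by
    intro d
    induction d using Nat.strong_induction_on with
    | _ d ih =>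
      intro hd
      set q : ℂ[X] := ((l.drop (n - d)).map fun z => Polynomial.X - C z).prod with hq
      have hqmono := (listprod_monic (l.drop (n-d))).1
      have hqdeg : q.natDegree = d := by
        rw [hq, (listprod_monic _).2, List.length_drop, hllen]; omega
      have hqlim := hsplit d hd
      have hih : ∀ i, i < d → ∃ ℓ : ℂ, Tendsto (X (i+1)) atTop (nhds ℓ) :=
        fun i hi => ih i hi (by omega)
      choose! ℓf hℓf using hih
      have hsum : Tendsto (fun t => ∑ i ∈ Finset.range d, q.coeff i * X (i+1) t) atTop
          (nhds (∑ i ∈ Finset.range d, q.coeff i * ℓf i)) :=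
        tendsto_finset_sum _ fun i hi => ((hℓf i (Finset.mem_range.1 hi)).const_mul _)
      refine ⟨(((c:ℝ):ℂ) / (List.map (fun z => -z) (List.take (n - d) l)).prod)
          - ∑ i ∈ Finset.range d, q.coeff i * ℓf i, ?_⟩
      have heq : ∀ t, X (d+1) t = Fop n X q t - ∑ i ∈ Finset.range d, q.coeff i * X (i+1) t := by
        intro t
        unfold Fop
        rw [Finset.range_eq_Ico,
          ← Finset.sum_Ico_consecutive _ (Nat.zero_le (d+1)) (by omega : d+1 ≤ n+1)]
        have hzero : ∑ i ∈ Finset.Ico (d+1) (n+1), q.coeff i * X (i+1) t = 0 := by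
          apply Finset.sum_eq_zero
          intro i hi
          rw [coeff_eq_zero_of_natDegree_lt (by rw [hqdeg]; exact (Finset.mem_Ico.1 hi).1),
            zero_mul]
        rw [hzero, add_zero, ← Finset.range_eq_Ico, Finset.sum_range_succ]
        have hc1 : q.coeff d = 1 := by
          have h2 := hqmono
          rw [Monic, leadingCoeff, hqdeg] at h2
          exact h2
        rw [hc1, one_mul]
        ring
      exact Tendsto.congr (fun t => (heq t).symm) (hqlim.sub hsum)
  have hxlim : ∀ j, 1 ≤ j → j ≤ m → ∃ r : ℝ, Tendsto (x j) atTop (nhds r) := by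
    intro j h1 h2
    obtain ⟨ℓ, hℓ⟩ := hXlim (j-1) (by omega)
    rw [show j - 1 + 1 = j by omega] at hℓ
    refine ⟨ℓ.re, ?_⟩
    exact ((Complex.continuous_re.tendsto ℓ).comp hℓ).congr (fun t => by simp [hX])
  choose! r hr using hxlim
  have hzero : ∀ j, 2 ≤ j → j ≤ m → r j = 0 := by
    intro j h2 hjm
    exact deriv_lim_zero (x (j-1)) (x j) (r (j-1)) (r j)
      (fun t ht => by
        have h3 := hchain (j-1) (by omega) (by omega) t ht
        rwa [show j-1+1 = j by omega] at h3)
      (hr (j-1) (by omega) (by omega)) (hr j (by omega) hjm)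
  have ha1 : a 1 ≠ 0 := by
    intro h0
    have h4 : (0:ℂ) ^ n + ∑ i ∈ Finset.range n, ((a (i+1):ℝ):ℂ) * 0 ^ i = 0 := by
      have h5 : ∑ i ∈ Finset.range n, ((a (i+1):ℝ):ℂ) * (0:ℂ) ^ i = ((a 1 : ℝ):ℂ) := by
        rw [Finset.sum_eq_single 0]
        · simp
        · intro j _ hne; simp [zero_pow hne]
        · intro h; simp at h; omega
      rw [h5, h0]
      simp [zero_pow (by omega : n ≠ 0)]
    have := hroots 0 h4
    simp at this
  have hxm : Tendsto (x m) atTop (nhds 0) := by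
    have h6 := hr m (by omega) le_rfl
    rwa [hzero m hm le_rfl] at h6
  have hcombo : Tendsto (fun t => (∑ i ∈ Finset.range n, a (i+1) * x (i+1) t) + x m t)
      atTop (nhds (a 1 * r 1)) := by
    have hsum : Tendsto (fun t => ∑ i ∈ Finset.range n, a (i+1) * x (i+1) t) atTop
        (nhds (∑ i ∈ Finset.range n, a (i+1) * r (i+1))) :=
      tendsto_finset_sum _ fun i hi =>
        ((hr (i+1) (by omega) (by have := Finset.mem_range.1 hi; omega)).const_mul _)
    have h7 := hsum.add hxm
    rw [add_zero] at h7
    have h8 : ∑ i ∈ Finset.range n, a (i+1) * r (i+1) = a 1 * r 1 := by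
      rw [Finset.sum_eq_single 0]
      · intro j hj hne
        rw [hzero (j+1) (by omega) (by have := Finset.mem_range.1 hj; omega), mul_zero]
      · intro h; simp at h; omega
    rwa [h8] at h7
  have hac : a 1 * r 1 = c := tendsto_nhds_unique hcombo hlim
  constructor
  · have h9 : c / a 1 = r 1 := by rw [← hac]; field_simp
    rw [h9]
    exact hr 1 (by omega) (by omega)
  · intro j h2 hjm
    have h10 := hr j (by omega) hjm
    rwa [hzero j h2 hjm] at h10
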